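/- Let n ≥ 2 and let T be a semistandard Young tableau of shape λ, where λ is a partition with at most 3 rows, with entries in {1,…,2n}, and suppose the reading word of T has dominant restriction. Then every column of T, read from top to bottom, is one of the following six sequences: (1), (1,2), (1,2,3), (1,2n), (1,2,2n−1), (1,2,2n). (When n = 2 the sequences (1,2,3) and (1,2,2n−1) coincide.) -/

import Mathlib

/-- Component `j` (0-indexed, `j < n`) of the vector in `ℤ^n` assigned to the letter
`i ∈ {1,…,2n}`: the letter `i` is sent to the standard basis vector `e_i` if `1 ≤ i ≤ n`,
and to `−e_{2n+1−i}` if `n < i ≤ 2n`. -/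
def letterVec (n i j : ℕ) : ℤ :=
  (if i = j + 1 then 1 else 0) - (if i + j = 2 * n then 1 else 0)

/-- Component `j` (0-indexed) of the sum of the vectors assigned to the letters of `w`. -/
def resSum (n : ℕ) (w : List ℕ) (j : ℕ) : ℤ :=
  (w.map fun i => letterVec n i j).sum

/-- A word `w` over `{1,…,2n}` has *dominant restriction* if every partial sum `p` of the
assigned vectors (over prefixes of `w`) satisfies `p 0 ≥ p 1 ≥ ⋯ ≥ p (n-1) ≥ 0`. -/
def DominantRes (n : ℕ) (w : List ℕ) : Prop :=
  ∀ k : ℕ,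
    (∀ j : ℕ, j + 1 < n → resSum n (w.take k) (j + 1) ≤ resSum n (w.take k) j) ∧
    0 ≤ resSum n (w.take k) (n - 1)

/-- A word over the positive integers is a *lattice word* if every prefix contains,
for each `i ≥ 1`, at least as many letters `i` as letters `i+1`. -/
def IsLatticeWord (w : List ℕ) : Prop :=
  ∀ k i : ℕ, 1 ≤ i → (w.take k).count (i + 1) ≤ (w.take k).count i

/-- The entries of row `r` (0-indexed) of `T` lying in the skew shape `lam/nu`,
read from right to left. -/
def skewRowWord (T : ℕ → ℕ → ℕ) (nu lam : ℕ → ℕ) (r : ℕ) : List ℕ :=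
  ((List.range' (nu r) (lam r - nu r)).map (T r)).reverse

/-- The reading word (rows right to left, top row to bottom row) of a skew tableau
whose rows are `0, …, k-1`. -/
def skewReadingWord (T : ℕ → ℕ → ℕ) (nu lam : ℕ → ℕ) (k : ℕ) : List ℕ :=
  ((List.range k).map (skewRowWord T nu lam)).flatten

/-- `T` is a skew semistandard tableau of shape `lam/nu`: entries are positive,
rows weakly increase from left to right, and columns strictly increase from top to bottom.
Rows are indexed `0, 1, 2, …` from the top and columns `0, 1, 2, …` from the left;
the cells of row `r` are the `c` with `nu r ≤ c < lam r`. -/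
def IsSkewSSYT (T : ℕ → ℕ → ℕ) (nu lam : ℕ → ℕ) : Prop :=
  (∀ r c, nu r ≤ c → c < lam r → 1 ≤ T r c) ∧
  (∀ r c c', nu r ≤ c → c ≤ c' → c' < lam r → T r c ≤ T r c') ∧
  (∀ r r' c, r < r' → nu r ≤ c → c < lam r → nu r' ≤ c → c < lam r' → T r c < T r' c)

/-- `T` is a semistandard Young tableau of (straight) shape `lam` with entries
in `{1, …, N}`. -/
def IsSSYT (T : ℕ → ℕ → ℕ) (lam : ℕ → ℕ) (N : ℕ) : Prop :=
  IsSkewSSYT T (fun _ => 0) lam ∧ ∀ r c, c < lam r → T r c ≤ N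

/-- The reading word of a straight-shape tableau with rows `0, …, k-1`. -/
def readingWord (T : ℕ → ℕ → ℕ) (lam : ℕ → ℕ) (k : ℕ) : List ℕ :=
  skewReadingWord T (fun _ => 0) lam k

/-- `T` vanishes outside the skew shape `lam/nu` (a normalization used when counting
tableaux, so that a tableau is determined by its entries inside the shape). -/
def ZeroOutside (T : ℕ → ℕ → ℕ) (nu lam : ℕ → ℕ) : Prop :=
  ∀ r c, c < nu r ∨ lam r ≤ c → T r c = 0

/-- The partition with (at most) three rows `a ≥ b ≥ c`, as a row-length function. -/
def shape3 (a b c : ℕ) : ℕ → ℕ :=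
  fun r => if r = 0 then a else if r = 1 then b else if r = 2 then c else 0

/-- `T` is a Littlewood–Richardson tableau of skew shape `lam/nu` and weight `eta`
(with rows `0, …, k-1`): a skew semistandard tableau whose reading word is a lattice
word and which has exactly `eta i` entries equal to `i + 1` for every `i`. -/
def IsLRTableau (T : ℕ → ℕ → ℕ) (nu lam eta : ℕ → ℕ) (k : ℕ) : Prop :=
  IsSkewSSYT T nu lam ∧ IsLatticeWord (skewReadingWord T nu lam k) ∧
    ∀ i : ℕ, (skewReadingWord T nu lam k).count (i + 1) = eta i

/-- The `n`-symplectic Sundaram condition for a tableau of skew shape `lam/nu`, where `l`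
is the length of the longest column of the weight: for each `i ≤ l/2`, the letter `2i+1`
does not occur strictly below row `n + i` (rows counted `1, 2, …` from the top; in the
0-indexed row `r` this means `r ≥ n + i`). -/
def IsSundaram (n l : ℕ) (T : ℕ → ℕ → ℕ) (nu lam : ℕ → ℕ) : Prop :=
  ∀ i : ℕ, i ≤ l / 2 → ∀ r c, n + i ≤ r → nu r ≤ c → c < lam r → T r c ≠ 2 * i + 1

/-! ### Auxiliary lemmas for `stmt4` -/

lemma resSum_append' (n : ℕ) (a b : List ℕ) (j : ℕ) :
    resSum n (a ++ b) j = resSum n a j + resSum n b j := by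
  simp [resSum]

lemma resSum_reverse' (n : ℕ) (a : List ℕ) (j : ℕ) :
    resSum n a.reverse j = resSum n a j := by
  simp [resSum, List.sum_reverse]

lemma resSum_cons' (n x : ℕ) (l : List ℕ) (j : ℕ) :
    resSum n (x :: l) j = letterVec n x j + resSum n l j := by
  simp [resSum]

lemma resSum_eq_zero' {n j : ℕ} {w : List ℕ}
    (h : ∀ x ∈ w, x ≠ j + 1 ∧ x + j ≠ 2 * n) : resSum n w j = 0 := by
  unfold resSum
  apply List.sum_eq_zero
  intro y hy
  obtain ⟨x, hx, rfl⟩ := List.mem_map.1 hy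
  simp [letterVec, (h x hx).1, (h x hx).2]

lemma dom_nonneg' {n : ℕ} {w : List ℕ} (h : DominantRes n w) (k j : ℕ) (hj : j < n) :
    0 ≤ resSum n (w.take k) j := by
  have key : ∀ d j, j + d + 1 = n → 0 ≤ resSum n (w.take k) j := by
    intro d
    induction d with
    | zero =>
      intro j hj
      have h2 := (h k).2
      rwa [show n - 1 = j from by omega] at h2
    | succ d ih =>
      intro j hj
      have h1 := (h k).1 j (by omega)
      have h2 := ih (j + 1) (by omega)
      linarith
  exact key (n - 1 - j) j (by omega)

lemma take_len_append' {α : Type*} (l₁ l₂ : List α) (t : ℕ) (h : t = l₁.length) :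
    (l₁ ++ l₂).take t = l₁ := by
  subst h; exact List.take_left

lemma resSum_take_key (n : ℕ) (A : List ℕ) (f : ℕ → ℕ) (L c la j : ℕ)
    (hc : c ≤ L) (hla : A.length = la) (B : List ℕ) :
    resSum n ((A ++ (((List.range' 0 L).map f).reverse ++ B)).take (la + (L - c))) j
      = resSum n A j + resSum n ((List.range' c (L - c)).map f) j := by
  have hsplit : List.range' 0 c ++ List.range' c (L - c) = List.range' 0 L := by
    have h := List.range'_append (s := 0) (m := c) (n := L - c) (step := 1)
    rw [show c + (L - c) = L from by omega] at h
    simpa using h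
  subst hla
  rw [← hsplit, List.map_append, List.reverse_append, List.append_assoc,
    List.take_append,
    take_len_append' _ _ _ (by simp),
    resSum_append', resSum_reverse', List.take_of_length_le (by simp)]

/-- Let `n ≥ 2` and let `T` be a semistandard Young tableau of a 3-row
shape `λ = (λ1, λ2, λ3)` with entries in `{1,…,2n}` whose reading word has dominant
restriction. Then each column of `T` (read top to bottom) is one of
`(1)`, `(1,2)`, `(1,2,3)`, `(1,2n)`, `(1,2,2n−1)`, `(1,2,2n)`. -/
theorem stmt4 (n : ℕ) (hn : 2 ≤ n) (lam1 lam2 lam3 : ℕ)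
    (h12 : lam2 ≤ lam1) (h23 : lam3 ≤ lam2)
    (T : ℕ → ℕ → ℕ) (hT : IsSSYT T (shape3 lam1 lam2 lam3) (2 * n))
    (hdom : DominantRes n (readingWord T (shape3 lam1 lam2 lam3) 3)) :
    ∀ c : ℕ,
      (c < lam3 →
        T 0 c = 1 ∧ T 1 c = 2 ∧ (T 2 c = 3 ∨ T 2 c = 2 * n - 1 ∨ T 2 c = 2 * n)) ∧
      (lam3 ≤ c → c < lam2 → T 0 c = 1 ∧ (T 1 c = 2 ∨ T 1 c = 2 * n)) ∧
      (lam2 ≤ c → c < lam1 → T 0 c = 1) := by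
  obtain ⟨⟨hpos, hrow, hcol⟩, hbd⟩ := hT
  have l0 : shape3 lam1 lam2 lam3 0 = lam1 := rfl
  have l1 : shape3 lam1 lam2 lam3 1 = lam2 := rfl
  have l2 : shape3 lam1 lam2 lam3 2 = lam3 := rfl
  set W := readingWord T (shape3 lam1 lam2 lam3) 3 with hWdef
  have hW : W = ((List.range' 0 lam1).map (T 0)).reverse ++
      (((List.range' 0 lam2).map (T 1)).reverse ++
        ((List.range' 0 lam3).map (T 2)).reverse) := by
    rw [hWdef]
    simp [readingWord, skewReadingWord, skewRowWord, shape3, List.range_succ]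
  -- Step A: top row is all 1's
  have hA : ∀ c, c < lam1 → T 0 c = 1 := by
    have hend : 0 < lam1 → T 0 (lam1 - 1) = 1 := by
      intro hl
      set m := T 0 (lam1 - 1) with hm
      have hm1 : 1 ≤ m := hpos 0 (lam1 - 1) (Nat.zero_le _) (by rw [l0]; omega)
      have hmu : m ≤ 2 * n := hbd 0 (lam1 - 1) (by rw [l0]; omega)
      have hkey : ∃ k : ℕ, ∀ j, resSum n (W.take k) j = letterVec n m j := by
        refine ⟨0 + (lam1 - (lam1 - 1)), fun j => ?_⟩
        have h := resSum_take_key n [] (T 0) lam1 (lam1 - 1) 0 j (by omega) rfl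
          ((((List.range' 0 lam2).map (T 1)).reverse ++
            ((List.range' 0 lam3).map (T 2)).reverse))
        rw [List.nil_append] at h
        rw [hW, h, show lam1 - (lam1 - 1) = 1 from by omega, List.range'_one]
        simp [resSum, ← hm]
      obtain ⟨k, hkey⟩ := hkey
      by_contra hne
      have hm2 : 2 ≤ m := by omega
      rcases le_or_gt m n with hmn | hmn
      · have h1 := (hdom k).1 (m - 2) (by omega)
        rw [hkey, hkey] at h1
        unfold letterVec at h1
        rw [if_pos (by omega), if_neg (by omega), if_neg (by omega),
          if_neg (by omega)] at h1
        omega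
      · have h2 := dom_nonneg' hdom k (2 * n - m) (by omega)
        rw [hkey] at h2
        unfold letterVec at h2
        rw [if_neg (by omega), if_pos (by omega)] at h2
        omega
    intro c hc
    have h1 : 1 ≤ T 0 c := hpos 0 c (Nat.zero_le _) (by rw [l0]; omega)
    have h2 : T 0 c ≤ T 0 (lam1 - 1) :=
      hrow 0 c (lam1 - 1) (Nat.zero_le _) (by omega) (by rw [l0]; omega)
    have h3 := hend (by omega)
    omega
  -- zero sum for the full first row
  have hz0 : ∀ j, 1 ≤ j → j < n →
      resSum n ((List.range' 0 lam1).map (T 0)) j = 0 := by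
    intro j hj1 hjn
    apply resSum_eq_zero'
    intro x hx
    obtain ⟨c', hc', rfl⟩ := List.mem_map.1 hx
    have hc'2 : c' < lam1 := by
      have := List.mem_range'_1.1 hc'
      omega
    have h1 := hA c' hc'2
    exact ⟨by omega, by omega⟩
  -- Step B: second row entries are 2 or 2n
  have hB : ∀ c, c < lam2 → T 1 c = 2 ∨ T 1 c = 2 * n := by
    have main : ∀ d c, lam2 ≤ c + d → c < lam2 → T 1 c = 2 ∨ T 1 c = 2 * n := by
      intro d
      induction d with
      | zero => intro c h1 h2; omega
      | succ d ih =>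
        intro c hcd hc
        set m := T 1 c with hm
        have hm2 : 2 ≤ m := by
          have h1 := hA c (by omega)
          have h2 := hcol 0 1 c (by omega) (Nat.zero_le _) (by rw [l0]; omega)
            (Nat.zero_le _) (by rw [l1]; exact hc)
          omega
        have hmu : m ≤ 2 * n := hbd 1 c (by rw [l1]; exact hc)
        have hrest : ∀ x ∈ (List.range' (c + 1) (lam2 - (c + 1))).map (T 1),
            m ≤ x ∧ (x = 2 ∨ x = 2 * n) := by
          intro x hx
          obtain ⟨c', hc', rfl⟩ := List.mem_map.1 hx
          have hcc := List.mem_range'_1.1 hc'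
          refine ⟨hrow 1 c c' (Nat.zero_le _) (by omega) (by rw [l1]; omega),
            ih c' (by omega) (by omega)⟩
        have hkey : ∃ k : ℕ, ∀ j, resSum n (W.take k) j =
            resSum n ((List.range' 0 lam1).map (T 0)) j + (letterVec n m j +
              resSum n ((List.range' (c + 1) (lam2 - (c + 1))).map (T 1)) j) := by
          refine ⟨lam1 + (lam2 - c), fun j => ?_⟩
          have h := resSum_take_key n (((List.range' 0 lam1).map (T 0)).reverse)
            (T 1) lam2 c lam1 j (by omega) (by simp)
            (((List.range' 0 lam3).map (T 2)).reverse)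
          rw [hW, h, resSum_reverse',
            show lam2 - c = (lam2 - (c + 1)) + 1 from by omega,
            List.range'_succ, List.map_cons, resSum_cons', ← hm]
        obtain ⟨k, hkey⟩ := hkey
        have not1 : ¬ (3 ≤ m ∧ m ≤ n) := by
          rintro ⟨h3, hmn⟩
          have hz1 : ∀ j, 1 ≤ j → j < n →
              resSum n ((List.range' (c + 1) (lam2 - (c + 1))).map (T 1)) j = 0 := by
            intro j hj1 hjn
            apply resSum_eq_zero'
            intro x hx
            have hx2 := hrest x hx
            exact ⟨by omega, by omega⟩
          have h1 := (hdom k).1 (m - 2) (by omega)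
          rw [hkey, hkey, hz0 (m - 2 + 1) (by omega) (by omega),
            hz0 (m - 2) (by omega) (by omega),
            hz1 (m - 2 + 1) (by omega) (by omega),
            hz1 (m - 2) (by omega) (by omega)] at h1
          unfold letterVec at h1
          rw [if_pos (by omega), if_neg (by omega), if_neg (by omega),
            if_neg (by omega)] at h1
          omega
        have not2 : ¬ (n + 1 ≤ m ∧ m ≤ 2 * n - 1) := by
          rintro ⟨h3, hmn⟩
          have hz1 : resSum n
              ((List.range' (c + 1) (lam2 - (c + 1))).map (T 1)) (2 * n - m) = 0 := by
            apply resSum_eq_zero'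
            intro x hx
            have hx2 := hrest x hx
            exact ⟨by omega, by omega⟩
          have h2 := dom_nonneg' hdom k (2 * n - m) (by omega)
          rw [hkey, hz0 (2 * n - m) (by omega) (by omega), hz1] at h2
          unfold letterVec at h2
          rw [if_neg (by omega), if_pos (by omega)] at h2
          omega
        omega
    intro c hc
    exact main lam2 c (by omega) hc
  -- zero sum for the full second row
  have hz1f : ∀ j, 2 ≤ j → j < n →
      resSum n ((List.range' 0 lam2).map (T 1)) j = 0 := by
    intro j hj1 hjn
    apply resSum_eq_zero'
    intro x hx
    obtain ⟨c', hc', rfl⟩ := List.mem_map.1 hx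
    have hc'2 : c' < lam2 := by
      have := List.mem_range'_1.1 hc'
      omega
    have h1 := hB c' hc'2
    exact ⟨by omega, by omega⟩
  -- Step C: third row entries are 3, 2n-1 or 2n
  have hC : ∀ c, c < lam3 → T 2 c = 3 ∨ T 2 c = 2 * n - 1 ∨ T 2 c = 2 * n := by
    have main : ∀ d c, lam3 ≤ c + d → c < lam3 →
        T 2 c = 3 ∨ T 2 c = 2 * n - 1 ∨ T 2 c = 2 * n := by
      intro d
      induction d with
      | zero => intro c h1 h2; omega
      | succ d ih =>
        intro c hcd hc
        set m := T 2 c with hm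
        have hm2 : 3 ≤ m := by
          have h1 := hB c (by omega)
          have h2 := hcol 1 2 c (by omega) (Nat.zero_le _) (by rw [l1]; omega)
            (Nat.zero_le _) (by rw [l2]; exact hc)
          have h3 : T 2 c ≤ 2 * n := hbd 2 c (by rw [l2]; exact hc)
          omega
        have hmu : m ≤ 2 * n := hbd 2 c (by rw [l2]; exact hc)
        have hrest : ∀ x ∈ (List.range' (c + 1) (lam3 - (c + 1))).map (T 2),
            m ≤ x ∧ (x = 3 ∨ x = 2 * n - 1 ∨ x = 2 * n) := by
          intro x hx
          obtain ⟨c', hc', rfl⟩ := List.mem_map.1 hx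
          have hcc := List.mem_range'_1.1 hc'
          refine ⟨hrow 2 c c' (Nat.zero_le _) (by omega) (by rw [l2]; omega),
            ih c' (by omega) (by omega)⟩
        have hkey : ∃ k : ℕ, ∀ j, resSum n (W.take k) j =
            (resSum n ((List.range' 0 lam1).map (T 0)) j +
              resSum n ((List.range' 0 lam2).map (T 1)) j) + (letterVec n m j +
              resSum n ((List.range' (c + 1) (lam3 - (c + 1))).map (T 2)) j) := by
          refine ⟨(lam1 + lam2) + (lam3 - c), fun j => ?_⟩
          have hW2 : W = (((List.range' 0 lam1).map (T 0)).reverse ++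
              ((List.range' 0 lam2).map (T 1)).reverse) ++
              (((List.range' 0 lam3).map (T 2)).reverse ++ ([] : List ℕ)) := by
            rw [hW]; simp
          have h := resSum_take_key n
            (((List.range' 0 lam1).map (T 0)).reverse ++
              ((List.range' 0 lam2).map (T 1)).reverse)
            (T 2) lam3 c (lam1 + lam2) j (by omega) (by simp) ([] : List ℕ)
          rw [hW2, h, resSum_append', resSum_reverse', resSum_reverse',
            show lam3 - c = (lam3 - (c + 1)) + 1 from by omega,
            List.range'_succ, List.map_cons, resSum_cons', ← hm]
        obtain ⟨k, hkey⟩ := hkey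
        have not1 : ¬ (4 ≤ m ∧ m ≤ n) := by
          rintro ⟨h3, hmn⟩
          have hz2 : ∀ j, 2 ≤ j → j < n →
              resSum n ((List.range' (c + 1) (lam3 - (c + 1))).map (T 2)) j = 0 := by
            intro j hj1 hjn
            apply resSum_eq_zero'
            intro x hx
            have hx2 := hrest x hx
            exact ⟨by omega, by omega⟩
          have h1 := (hdom k).1 (m - 2) (by omega)
          rw [hkey, hkey, hz0 (m - 2 + 1) (by omega) (by omega),
            hz0 (m - 2) (by omega) (by omega),
            hz1f (m - 2 + 1) (by omega) (by omega),
            hz1f (m - 2) (by omega) (by omega),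
            hz2 (m - 2 + 1) (by omega) (by omega),
            hz2 (m - 2) (by omega) (by omega)] at h1
          unfold letterVec at h1
          rw [if_pos (by omega), if_neg (by omega), if_neg (by omega),
            if_neg (by omega)] at h1
          omega
        have not2 : ¬ (n + 1 ≤ m ∧ m ≤ 2 * n - 2) := by
          rintro ⟨h3, hmn⟩
          have hz2 : resSum n
              ((List.range' (c + 1) (lam3 - (c + 1))).map (T 2)) (2 * n - m) = 0 := by
            apply resSum_eq_zero'
            intro x hx
            have hx2 := hrest x hx
            exact ⟨by omega, by omega⟩
          have h2 := dom_nonneg' hdom k (2 * n - m) (by omega)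
          rw [hkey, hz0 (2 * n - m) (by omega) (by omega),
            hz1f (2 * n - m) (by omega) (by omega), hz2] at h2
          unfold letterVec at h2
          rw [if_neg (by omega), if_pos (by omega)] at h2
          omega
        omega
    intro c hc
    exact main lam3 c (by omega) hc
  -- Assemble
  intro c
  refine ⟨fun hc => ?_, fun hc1 hc2 => ?_, fun hc1 hc2 => ?_⟩
  · have h0 := hA c (by omega)
    have h1 := hB c (by omega)
    have h2 := hC c hc
    have h3 := hcol 1 2 c (by omega) (Nat.zero_le _) (by rw [l1]; omega)
      (Nat.zero_le _) (by rw [l2]; exact hc)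
    have h4 : T 2 c ≤ 2 * n := hbd 2 c (by rw [l2]; exact hc)
    exact ⟨h0, by omega, h2⟩
  · exact ⟨hA c (by omega), hB c hc2⟩
  · exact hA c hc2
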